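/- arXiv:2302.06483 — 2 statements merged into one kernel-verified Lean document; each statement's English description precedes it below -/
import Mathlib

section
/- Let f^{[α]}, g^{[β]} ∈ I^{[Σ]} with f, g ≠ 0 and let a ∈ amb(f^{[α]}, g^{[β]}). Then there exist Bézout coefficients c, d ∈ R with c·LC(f) + d·LC(g) = gcd(LC(f), LC(g)) such that the G-polynomial G-Pol_{c,d}(a) = c m1 f^{[α]} n1 + d m2 g^{[β]} n2 satisfies sig(G-Pol_{c,d}(a)) ≃ SIG(a), i.e., the G-polynomial is not singular. -/
/-!  Signature Gröbner bases in the mixed algebra `R[x₁,…,x_k]⟨y₁,…,y_n⟩`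
over a principal ideal domain `R`, following Hofstadler–Verron. -/

open Finsupp

/-- A mixed monomial `v·w`, with `v` a commutative monomial in `x₁,…,x_k`
(recorded by its exponent vector) and `w` a word in the noncommutative
variables `y₁,…,y_n`. -/
@[ext]
structure MMon (k n : ℕ) where
  c : Fin k →₀ ℕ
  w : FreeMonoid (Fin n)

namespace MMon

instance (k n : ℕ) : One (MMon k n) := ⟨⟨0, 1⟩⟩
noncomputable instance (k n : ℕ) : Mul (MMon k n) := ⟨fun a b => ⟨a.c + b.c, a.w * b.w⟩⟩

@[simp] lemma mul_c {k n : ℕ} (a b : MMon k n) : (a * b).c = a.c + b.c := rfl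
@[simp] lemma mul_w {k n : ℕ} (a b : MMon k n) : (a * b).w = a.w * b.w := rfl
@[simp] lemma one_c {k n : ℕ} : (1 : MMon k n).c = 0 := rfl
@[simp] lemma one_w {k n : ℕ} : (1 : MMon k n).w = 1 := rfl

noncomputable instance (k n : ℕ) : Monoid (MMon k n) where
  mul_assoc a b c := by ext : 1 <;> simp [add_assoc, mul_assoc]
  one_mul a := by ext : 1 <;> simp
  mul_one a := by ext : 1 <;> simp

end MMon

/-- A module monomial `u·a·ε_i·b` of the free bimodule `Σ = (A ⊗_{R[X]} A)^r`. -/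
@[ext]
structure ModMon (k n r : ℕ) where
  u : Fin k →₀ ℕ
  a : FreeMonoid (Fin n)
  i : Fin r
  b : FreeMonoid (Fin n)

instance {k n r : ℕ} [NeZero r] : Inhabited (ModMon k n r) := ⟨⟨0, 1, default, 1⟩⟩

/-- The mixed algebra `A = R[x₁,…,x_k]⟨y₁,…,y_n⟩`, realised as the monoid
algebra of the monoid of mixed monomials. -/
abbrev MixedAlg (R : Type) [CommRing R] (k n : ℕ) : Type := MonoidAlgebra R (MMon k n)

/-- The free `A`-bimodule `Σ = (A ⊗_{R[X]} A)^r`, realised as the free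
`R`-module on the module monomials `u·a·ε_i·b`. -/
abbrev SigModule (R : Type) [CommRing R] (k n r : ℕ) : Type := ModMon k n r →₀ R

section Defs

variable {R : Type} [CommRing R] {k n r : ℕ}

/-- The term `c·m` of `A` (an element of `T(A)` when `c ≠ 0`). -/
noncomputable def trm (m : MMon k n) (c : R) : MixedAlg R k n := MonoidAlgebra.single m c

/-- The word `b ∈ ⟨Y⟩`, viewed as an element of `A`. -/
noncomputable def wrd (b : FreeMonoid (Fin n)) : MixedAlg R k n :=
  MonoidAlgebra.single ⟨0, b⟩ 1

/-- Multiplication `m·σ` of a module monomial by a mixed monomial on the left. -/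
noncomputable def mulL (m : MMon k n) (σ : ModMon k n r) : ModMon k n r :=
  ⟨m.c + σ.u, m.w * σ.a, σ.i, σ.b⟩

/-- Multiplication `σ·m` of a module monomial by a mixed monomial on the right. -/
noncomputable def mulR (σ : ModMon k n r) (m : MMon k n) : ModMon k n r :=
  ⟨σ.u + m.c, σ.a, σ.i, σ.b * m.w⟩

/-- The two-sided multiple `m·σ·b` of a module monomial by a mixed monomial `m`
on the left and a word `b` on the right. -/
noncomputable def mulLR (m : MMon k n) (σ : ModMon k n r) (b : FreeMonoid (Fin n)) : ModMon k n r :=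
  ⟨m.c + σ.u, m.w * σ.a, σ.i, σ.b * b⟩

/-- The left action of `A` on the bimodule `Σ`. -/
noncomputable def actL (f : MixedAlg R k n) (α : SigModule R k n r) : SigModule R k n r :=
  Finsupp.sum f.coeff fun m cm => Finsupp.sum α fun σ cσ => Finsupp.single (mulL m σ) (cm * cσ)

/-- The right action of `A` on the bimodule `Σ`. -/
noncomputable def actR (α : SigModule R k n r) (f : MixedAlg R k n) : SigModule R k n r :=
  Finsupp.sum f.coeff fun m cm => Finsupp.sum α fun σ cσ => Finsupp.single (mulR σ m) (cσ * cm)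

/-- The two-sided multiple `t·α·b` of `α ∈ Σ` by the term `t = c·m` on the left
and the word `b` on the right. -/
noncomputable def scaleLR (m : MMon k n) (c : R) (α : SigModule R k n r)
    (b : FreeMonoid (Fin n)) : SigModule R k n r :=
  Finsupp.sum α fun σ cσ => Finsupp.single (mulLR m σ b) (c * cσ)

/-- The `A`-bimodule homomorphism `Σ → A`, `α ↦ ᾱ`, sending `ε_i` to `f_i`
(where `F i = f_i` are the generators). -/
noncomputable def barMap (F : Fin r → MixedAlg R k n) (α : SigModule R k n r) :
    MixedAlg R k n :=
  Finsupp.sum α fun σ cσ =>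
    trm ⟨σ.u, σ.a⟩ cσ * F σ.i * wrd σ.b

/-- The basis vector `ε_i` of `Σ`. -/
noncomputable def epsMod (i : Fin r) : SigModule R k n r :=
  Finsupp.single ⟨0, 1, i, 1⟩ 1

/-- The labeled module `I^{[Σ]}`: pairs `f^{[α]}` with `ᾱ = f`. -/
def Labeled (F : Fin r → MixedAlg R k n) (p : MixedAlg R k n × SigModule R k n r) : Prop :=
  barMap F p.2 = p.1

/-- A syzygy of `I^{[Σ]}`: an element `α ∈ Σ` with `ᾱ = 0`. -/
def IsSyzygy (F : Fin r → MixedAlg R k n) (γ : SigModule R k n r) : Prop :=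
  barMap F γ = 0

section Orders

variable [LinearOrder (MMon k n)] [LinearOrder (ModMon k n r)]

/-- The leading monomial of `f ∈ A` (with `LM 0 = ⊥`). -/
noncomputable def LMb (f : MixedAlg R k n) : WithBot (MMon k n) := f.coeff.support.max

/-- The leading monomial of `f ∈ A` (defaulting to `1` for `f = 0`). -/
noncomputable def LMd (f : MixedAlg R k n) : MMon k n := WithBot.unbotD 1 (f.coeff.support.max)

/-- The leading coefficient of `f ∈ A` (`0` for `f = 0`). -/
noncomputable def LC (f : MixedAlg R k n) : R := f.coeff (LMd f)

/-- The leading term of `f ∈ A`, as an element of `A` (`0` for `f = 0`). -/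
noncomputable def LTerm (f : MixedAlg R k n) : MixedAlg R k n := trm (LMd f) (LC f)

/-- The signature monomial of `α ∈ Σ` (with `⊥` for `α = 0`): the `⪯`-largest
monomial of the support of `α`. -/
noncomputable def sigb (α : SigModule R k n r) : WithBot (ModMon k n r) := α.support.max

variable [NeZero r]

/-- The signature monomial of `α ∈ Σ`, defaulting for `α = 0`. -/
noncomputable def sigMd (α : SigModule R k n r) : ModMon k n r :=
  WithBot.unbotD default (α.support.max)

/-- The coefficient of the signature of `α`. -/
noncomputable def sigC (α : SigModule R k n r) : R := α (sigMd α)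

/-- The signature `sig(α)` of `α ∈ Σ`, as a term, i.e. a single-term element of
`Σ` (`0` for `α = 0`).  Equality `sig α = sig β` of signatures as *terms* is
`sigT α = sigT β`; the relation `sig α ≃ sig β` is `sigb α = sigb β`; the
relation `sig α ≺ sig β` is `sigb α < sigb β`. -/
noncomputable def sigT (α : SigModule R k n r) : SigModule R k n r :=
  Finsupp.single (sigMd α) (sigC α)

end Orders

/-- The compatibility requirements on the chosen monomial ordering on `M(A)`
and module ordering on `M(Σ)`: both are compatible with multiplication,
both are well-orderings, and they are compatible with each other. -/
structure IsOrderSetting (k n r : ℕ) [LinearOrder (MMon k n)]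
    [LinearOrder (ModMon k n r)] : Prop where
  mon_wf : WellFounded ((· < ·) : MMon k n → MMon k n → Prop)
  mod_wf : WellFounded ((· < ·) : ModMon k n r → ModMon k n r → Prop)
  mon_mul : ∀ a b m m' : MMon k n, m ≤ m' → a * m * b ≤ a * m' * b
  mod_mul : ∀ (m : MMon k n) (b : FreeMonoid (Fin n)) (σ τ : ModMon k n r),
      σ ≤ τ → mulLR m σ b ≤ mulLR m τ b
  compat₁ : ∀ (u v : Fin k →₀ ℕ) (a b : FreeMonoid (Fin n)) (i : Fin r),
      (⟨u, a⟩ : MMon k n) < ⟨v, b⟩ ↔ (⟨u, a, i, 1⟩ : ModMon k n r) < ⟨v, b, i, 1⟩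
  compat₂ : ∀ (u v : Fin k →₀ ℕ) (a b : FreeMonoid (Fin n)) (i : Fin r),
      (⟨u, a⟩ : MMon k n) < ⟨v, b⟩ ↔ (⟨u, 1, i, a⟩ : ModMon k n r) < ⟨v, 1, i, b⟩

end Defs

/-! ### Ambiguities -/

/-- `WordAmb a b c d p q` says that `(a ⊗ b, c ⊗ d, p, q)` is an ambiguity
(overlap, inclusion or external) of the words `p` and `q`. -/
inductive WordAmb {n : ℕ} :
    FreeMonoid (Fin n) → FreeMonoid (Fin n) → FreeMonoid (Fin n) → FreeMonoid (Fin n) →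
    FreeMonoid (Fin n) → FreeMonoid (Fin n) → Prop
  | overlap₁ (a b p q : FreeMonoid (Fin n)) (h : a * p = q * b)
      (ha : a ≠ 1) (hb : b ≠ 1) (hla : a.length < q.length) (hlb : b.length < p.length) :
      WordAmb a 1 1 b p q
  | overlap₂ (a b p q : FreeMonoid (Fin n)) (h : p * a = b * q)
      (ha : a ≠ 1) (hb : b ≠ 1) (hla : a.length < q.length) (hlb : b.length < p.length) :
      WordAmb 1 a b 1 p q
  | inclusion₁ (a b p q : FreeMonoid (Fin n)) (h : p = a * q * b) :
      WordAmb 1 1 a b p q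
  | inclusion₂ (a b p q : FreeMonoid (Fin n)) (h : a * p * b = q) :
      WordAmb a b 1 1 p q
  | external₁ (m p q : FreeMonoid (Fin n)) :
      WordAmb 1 (m * q) (p * m) 1 p q
  | external₂ (m p q : FreeMonoid (Fin n)) :
      WordAmb (q * m) 1 1 (m * p) p q

section Amb

variable {R : Type} [CommRing R] {k n r : ℕ}
variable [LinearOrder (MMon k n)] [LinearOrder (ModMon k n r)]

/-- `IsAmb f g m₁ n₁ m₂ n₂` says that `(m₁ ⊗ n₁, m₂ ⊗ n₂)` is an ambiguity of the
(nonzero) polynomials `f` and `g`: an ambiguity of the word parts of their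
leading monomials, with left cofactors completed by `lcm(u,v)/u` resp.
`lcm(u,v)/v` on the commutative parts. -/
def IsAmb (f g : MixedAlg R k n) (m₁ : MMon k n) (n₁ : FreeMonoid (Fin n))
    (m₂ : MMon k n) (n₂ : FreeMonoid (Fin n)) : Prop :=
  ∃ a b c d : FreeMonoid (Fin n),
    WordAmb a b c d (LMd f).w (LMd g).w ∧
    m₁ = ⟨((LMd f).c ⊔ (LMd g).c) - (LMd f).c, a⟩ ∧ n₁ = b ∧
    m₂ = ⟨((LMd f).c ⊔ (LMd g).c) - (LMd g).c, c⟩ ∧ n₂ = d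

/-- The leading monomial `LM(a) = LM(m₁ f n₁) = LM(m₂ g n₂)` of an ambiguity. -/
noncomputable def ambLM (f : MixedAlg R k n) (m₁ : MMon k n) (n₁ : FreeMonoid (Fin n)) :
    MMon k n :=
  m₁ * LMd f * ⟨0, n₁⟩

variable [IsDomain R] [GCDMonoid R]

/-- The cofactor `lcmlc(f,g)/LC(f)`. -/
noncomputable def cofL (f g : MixedAlg R k n) : R :=
  Classical.choose (dvd_lcm_left (LC f) (LC g))

/-- The cofactor `lcmlc(f,g)/LC(g)`. -/
noncomputable def cofR (f g : MixedAlg R k n) : R :=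
  Classical.choose (dvd_lcm_right (LC f) (LC g))

variable [NeZero r]

/-- The signature `SIG(a) = max(sig(c_f m₁ α n₁), −sig(c_g m₂ β n₂))` (first in
case of tie) of an ambiguity `a = (m₁ ⊗ n₁, m₂ ⊗ n₂)` of `f^{[α]]`, `g^{[β]}`,
as a term (single-term element) of `Σ`. -/
noncomputable def ambSIG (f g : MixedAlg R k n) (α β : SigModule R k n r)
    (m₁ : MMon k n) (n₁ : FreeMonoid (Fin n)) (m₂ : MMon k n) (n₂ : FreeMonoid (Fin n)) :
    SigModule R k n r :=
  if sigb (scaleLR m₂ (cofR f g) β n₂) ≤ sigb (scaleLR m₁ (cofL f g) α n₁) then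
    sigT (scaleLR m₁ (cofL f g) α n₁)
  else
    - sigT (scaleLR m₂ (cofR f g) β n₂)

/-- An ambiguity is regular if `sig(m₁ α n₁) ≄ sig(m₂ β n₂)`. -/
def RegAmb (α β : SigModule R k n r) (m₁ : MMon k n) (n₁ : FreeMonoid (Fin n))
    (m₂ : MMon k n) (n₂ : FreeMonoid (Fin n)) : Prop :=
  sigb (scaleLR m₁ (1 : R) α n₁) ≠ sigb (scaleLR m₂ (1 : R) β n₂)

/-- An ambiguity is singular if `sig(c_f m₁ α n₁) = sig(c_g m₂ β n₂)`. -/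
def SingAmb (f g : MixedAlg R k n) (α β : SigModule R k n r) (m₁ : MMon k n)
    (n₁ : FreeMonoid (Fin n)) (m₂ : MMon k n) (n₂ : FreeMonoid (Fin n)) : Prop :=
  sigT (scaleLR m₁ (cofL f g) α n₁) = sigT (scaleLR m₂ (cofR f g) β n₂)

/-- The polynomial part of the S-polynomial of an ambiguity. -/
noncomputable def SPolP (f g : MixedAlg R k n) (m₁ : MMon k n) (n₁ : FreeMonoid (Fin n))
    (m₂ : MMon k n) (n₂ : FreeMonoid (Fin n)) : MixedAlg R k n :=
  trm m₁ (cofL f g) * f * wrd n₁ - trm m₂ (cofR f g) * g * wrd n₂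

/-- The module part of the S-polynomial of an ambiguity. -/
noncomputable def SPolM (f g : MixedAlg R k n) (α β : SigModule R k n r) (m₁ : MMon k n)
    (n₁ : FreeMonoid (Fin n)) (m₂ : MMon k n) (n₂ : FreeMonoid (Fin n)) :
    SigModule R k n r :=
  scaleLR m₁ (cofL f g) α n₁ - scaleLR m₂ (cofR f g) β n₂

/-- The polynomial part of the G-polynomial of an ambiguity, w.r.t. Bézout
coefficients `c`, `d`. -/
noncomputable def GPolP (c d : R) (f g : MixedAlg R k n) (m₁ : MMon k n)
    (n₁ : FreeMonoid (Fin n)) (m₂ : MMon k n) (n₂ : FreeMonoid (Fin n)) : MixedAlg R k n :=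
  trm m₁ c * f * wrd n₁ + trm m₂ d * g * wrd n₂

/-- The module part of the G-polynomial of an ambiguity, w.r.t. Bézout
coefficients `c`, `d`. -/
noncomputable def GPolM (c d : R) (α β : SigModule R k n r) (m₁ : MMon k n)
    (n₁ : FreeMonoid (Fin n)) (m₂ : MMon k n) (n₂ : FreeMonoid (Fin n)) :
    SigModule R k n r :=
  scaleLR m₁ c α n₁ + scaleLR m₂ d β n₂

/-- `BezoutFor c d f g`: `c, d` are Bézout coefficients for `LC f`, `LC g`. -/
def BezoutFor (c d : R) (f g : MixedAlg R k n) : Prop :=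
  c * LC f + d * LC g = gcd (LC f) (LC g)

end Amb

/-! ### Reductions, bases, cover -/

section Red

variable {R : Type} [CommRing R] {k n r : ℕ}
variable [LinearOrder (MMon k n)] [LinearOrder (ModMon k n r)]

/-- `f^{[α]}` is (top) sig-reducible by `G`: there are `g^{[β]} ∈ G`, a term
`t = c·m` and a word `b` with `LT(t g b) = LT(f) > LT(f - t g b)` and
`sig(t β b) ⪯ sig(α)`. -/
def SigReducible (G : Set (MixedAlg R k n × SigModule R k n r))
    (f : MixedAlg R k n) (α : SigModule R k n r) : Prop :=
  ∃ g β, (g, β) ∈ G ∧ ∃ (m : MMon k n) (c : R) (b : FreeMonoid (Fin n)), c ≠ 0 ∧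
    LTerm (trm m c * g * wrd b) = LTerm f ∧
    LMb (f - trm m c * g * wrd b) < LMb f ∧
    sigb (scaleLR m c β b) ≤ sigb α

/-- `f^{[α]}` is regular sig-reducible by `G`. -/
def RegSigReducible (G : Set (MixedAlg R k n × SigModule R k n r))
    (f : MixedAlg R k n) (α : SigModule R k n r) : Prop :=
  ∃ g β, (g, β) ∈ G ∧ ∃ (m : MMon k n) (c : R) (b : FreeMonoid (Fin n)), c ≠ 0 ∧
    LTerm (trm m c * g * wrd b) = LTerm f ∧
    LMb (f - trm m c * g * wrd b) < LMb f ∧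
    sigb (scaleLR m c β b) < sigb α

/-- `f^{[α]}` is super reducible by `G`: there are `g^{[β]} ∈ G`, a term `t` and
a word `b` with `sig(α) = sig(t β b)` (as terms) and `LM(f) = LM(t g b)`. -/
def SuperReducible [NeZero r] (G : Set (MixedAlg R k n × SigModule R k n r))
    (f : MixedAlg R k n) (α : SigModule R k n r) : Prop :=
  ∃ g β, (g, β) ∈ G ∧ ∃ (m : MMon k n) (c : R) (b : FreeMonoid (Fin n)), c ≠ 0 ∧
    sigT α = sigT (scaleLR m c β b) ∧
    LMb f = LMb (trm m c * g * wrd b)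

/-- `α ∈ Σ` is (top) reducible by the set `H ⊆ Σ`: `sig(α) = sig(t γ b)` for
some `γ ∈ H`, term `t` and word `b`. -/
def ModReducible [NeZero r] (H : Set (SigModule R k n r)) (α : SigModule R k n r) : Prop :=
  ∃ γ ∈ H, ∃ (m : MMon k n) (c : R) (b : FreeMonoid (Fin n)), c ≠ 0 ∧
    sigT α = sigT (scaleLR m c γ b)

/-- `G` is a (strong) signature Gröbner basis of `I^{[Σ]}`. -/
def IsSigGB (F : Fin r → MixedAlg R k n) (G : Set (MixedAlg R k n × SigModule R k n r)) :
    Prop :=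
  ∀ f α, barMap F α = f → f ≠ 0 → SigReducible G f α

/-- `G` is a signature Gröbner basis of `I^{[Σ]}` up to (module monomial)
signature `σ`. -/
def IsSigGBUpTo (F : Fin r → MixedAlg R k n)
    (G : Set (MixedAlg R k n × SigModule R k n r)) (σ : WithBot (ModMon k n r)) : Prop :=
  ∀ f α, barMap F α = f → f ≠ 0 → sigb α < σ → SigReducible G f α

/-- `H` is a syzygy basis of `I^{[Σ]}`. -/
def IsSyzBasis [NeZero r] (F : Fin r → MixedAlg R k n) (H : Set (SigModule R k n r)) :
    Prop :=
  ∀ γ, IsSyzygy F γ → γ ≠ 0 → ModReducible H γ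

variable [IsDomain R] [GCDMonoid R] [NeZero r]

/-- `G` is complete: the G-polynomials (w.r.t. non-singular Bézout coefficients)
of all ambiguities of `G` are sig-reducible by `G`. -/
def CompleteSet (G : Set (MixedAlg R k n × SigModule R k n r)) : Prop :=
  ∀ g₁ β₁ g₂ β₂, (g₁, β₁) ∈ G → (g₂, β₂) ∈ G →
    ∀ m₁ n₁ m₂ n₂, IsAmb g₁ g₂ m₁ n₁ m₂ n₂ →
      ∀ c d, BezoutFor c d g₁ g₂ →
        sigb (GPolM c d β₁ β₂ m₁ n₁ m₂ n₂) = sigb (ambSIG g₁ g₂ β₁ β₂ m₁ n₁ m₂ n₂) →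
        SigReducible G (GPolP c d g₁ g₂ m₁ n₁ m₂ n₂) (GPolM c d β₁ β₂ m₁ n₁ m₂ n₂)

/-- `MonLcm σ₁ σ₂ τ`: the least common multiple `lcm(σ₁,σ₂)` of the module
monomials `σ₁ = u₁a₁ε_jb₁`, `σ₂ = u₂a₂ε_jb₂` is defined and equals `τ`. -/
def MonLcm (σ₁ σ₂ τ : ModMon k n r) : Prop :=
  σ₁.i = σ₂.i ∧ τ.i = σ₁.i ∧ τ.u = σ₁.u ⊔ σ₂.u ∧
  ((τ.a = σ₁.a ∧ ∃ s, σ₁.a = s * σ₂.a) ∨ (τ.a = σ₂.a ∧ ∃ s, σ₂.a = s * σ₁.a)) ∧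
  ((τ.b = σ₁.b ∧ ∃ s, σ₁.b = σ₂.b * s) ∨ (τ.b = σ₂.b ∧ ∃ s, σ₂.b = σ₁.b * s))

/-- `H` is sig-complete: all sig-Combinations of elements of `H` are reducible
by `H`. -/
def SigCompleteSet (H : Set (SigModule R k n r)) : Prop :=
  ∀ γ₁ ∈ H, ∀ γ₂ ∈ H, ∀ τ, MonLcm (sigMd γ₁) (sigMd γ₂) τ →
    ∀ (m₁ : MMon k n) (b₁ : FreeMonoid (Fin n)) (m₂ : MMon k n) (b₂ : FreeMonoid (Fin n)),
      mulLR m₁ (sigMd γ₁) b₁ = τ → mulLR m₂ (sigMd γ₂) b₂ = τ →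
      ∀ c d : R, c * sigC γ₁ + d * sigC γ₂ = gcd (sigC γ₁) (sigC γ₂) →
        ModReducible H (scaleLR m₁ c γ₁ b₁ + scaleLR m₂ d γ₂ b₂)

/-- The ambiguity `a` (of `g₁^{[β₁]}`, `g₂^{[β₂]}`), with signature `SIG(a)` and
leading monomial `LM(a)`, is covered by `(G, H)`: there are `g^{[β]} ∈ G`,
`γ ∈ H`, terms `t, t'` (possibly `0`) and words `b, b'` with
`SIG(a) = sig(t β b) + sig(t' γ b')` and `LM(t g b) < LM(a)`. -/
def CoveredBy (G : Set (MixedAlg R k n × SigModule R k n r))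
    (H : Set (SigModule R k n r)) (Sig : SigModule R k n r) (Lm : MMon k n) : Prop :=
  ∃ g β, (g, β) ∈ G ∧ ∃ γ ∈ H,
    ∃ (m : MMon k n) (c : R) (b : FreeMonoid (Fin n))
      (m' : MMon k n) (c' : R) (b' : FreeMonoid (Fin n)),
      Sig = sigT (scaleLR m c β b) + sigT (scaleLR m' c' γ b') ∧
      LMb (trm m c * g * wrd b) < (Lm : WithBot (MMon k n))

end Red

section GPolAux

variable {R : Type} [CommRing R] {k n r : ℕ}

/-- Characterization of the maximum of the support of a finsupp. -/
lemma supp_max_eq {M : Type} [LinearOrder M] {x : M →₀ R} {τ : M}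
    (h1 : x τ ≠ 0) (h2 : ∀ σ ∈ x.support, σ ≤ τ) : x.support.max = (τ : WithBot M) :=
  le_antisymm (Finset.max_le fun b hb => WithBot.coe_le_coe.2 (h2 b hb))
    (Finset.le_max (Finsupp.mem_support_iff.2 h1))

section ModOrd

variable [LinearOrder (MMon k n)] [LinearOrder (ModMon k n r)] [NeZero r]

lemma sigb_eq_of_ne_zero {α : SigModule R k n r} (h : α ≠ 0) :
    sigb α = (sigMd α : WithBot (ModMon k n r)) := by
  obtain ⟨a, hax⟩ := Finset.max_of_nonempty (Finsupp.support_nonempty_iff.2 h)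
  simp [sigb, sigMd, hax]

lemma sigMd_mem_support {α : SigModule R k n r} (h : α ≠ 0) : sigMd α ∈ α.support := by
  obtain ⟨a, hax⟩ := Finset.max_of_nonempty (Finsupp.support_nonempty_iff.2 h)
  have h1 : sigMd α = a := by simp [sigMd, hax]
  rw [h1]
  exact Finset.mem_of_max hax

lemma sigC_ne_zero {α : SigModule R k n r} (h : α ≠ 0) : sigC α ≠ 0 :=
  Finsupp.mem_support_iff.1 (sigMd_mem_support h)

lemma le_sigMd {α : SigModule R k n r} {σ : ModMon k n r} (hσ : σ ∈ α.support) :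
    σ ≤ sigMd α := by
  have h : α ≠ 0 := by rintro rfl; simp at hσ
  have h1 : (σ : WithBot (ModMon k n r)) ≤ α.support.max := Finset.le_max hσ
  rw [show α.support.max = sigb α from rfl, sigb_eq_of_ne_zero h] at h1
  exact_mod_cast h1

lemma sigb_sigT (α : SigModule R k n r) : sigb (sigT α) = sigb α := by
  by_cases h : α = 0
  · subst h
    have h0 : sigC (0 : SigModule R k n r) = 0 := rfl
    simp [sigT, h0, sigb]
  · rw [sigb_eq_of_ne_zero h, sigT]
    have hc := sigC_ne_zero h
    rw [show sigb (Finsupp.single (sigMd α) (sigC α))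
        = (Finsupp.single (sigMd α) (sigC α)).support.max from rfl,
      Finsupp.support_single_ne_zero _ hc]
    simp

lemma sigb_neg (α : SigModule R k n r) : sigb (-α) = sigb α := by
  rw [sigb, sigb, Finsupp.support_neg]

lemma mulLR_injective (m : MMon k n) (b : FreeMonoid (Fin n)) :
    Function.Injective (fun σ : ModMon k n r => mulLR m σ b) := by
  rintro ⟨u1, a1, i1, b1⟩ ⟨u2, a2, i2, b2⟩ h
  simp only [mulLR, ModMon.mk.injEq] at h
  obtain ⟨h1, h2, h3, h4⟩ := h
  exact ModMon.ext (add_left_cancel h1) (mul_left_cancel h2) h3 (mul_right_cancel h4)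

lemma scaleLR_eq_mapDomain (m : MMon k n) (c : R) (α : SigModule R k n r)
    (b : FreeMonoid (Fin n)) :
    scaleLR m c α b = Finsupp.mapDomain (fun σ => mulLR m σ b) (c • α) := by
  rw [Finsupp.mapDomain, Finsupp.sum_smul_index (fun i => Finsupp.single_zero _)]
  rfl

lemma scaleLR_apply (m : MMon k n) (c : R) (α : SigModule R k n r)
    (b : FreeMonoid (Fin n)) (σ : ModMon k n r) :
    scaleLR m c α b (mulLR m σ b) = c * α σ := by
  rw [scaleLR_eq_mapDomain, Finsupp.mapDomain_apply (mulLR_injective m b)]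
  simp

lemma scaleLR_support_le (hord : IsOrderSetting k n r) (m : MMon k n) (c : R)
    (α : SigModule R k n r) (b : FreeMonoid (Fin n)) {τ : ModMon k n r}
    (hτ : τ ∈ (scaleLR m c α b).support) : τ ≤ mulLR m (sigMd α) b := by
  classical
  rw [scaleLR_eq_mapDomain] at hτ
  have h1 := Finsupp.mapDomain_support hτ
  obtain ⟨σ, hσ, rfl⟩ := Finset.mem_image.1 h1
  have hσ' : σ ∈ α.support := Finsupp.support_smul hσ
  exact hord.mod_mul m b σ (sigMd α) (le_sigMd hσ')

lemma sigb_scaleLR (hord : IsOrderSetting k n r) (m : MMon k n) {c : R}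
    {α : SigModule R k n r} (b : FreeMonoid (Fin n)) (hc : c ≠ 0) (hα : α ≠ 0)
    [IsDomain R] :
    sigb (scaleLR m c α b) = (mulLR m (sigMd α) b : WithBot (ModMon k n r)) := by
  refine supp_max_eq ?_ (fun σ hσ => scaleLR_support_le hord m c α b hσ)
  rw [scaleLR_apply]
  exact mul_ne_zero hc (sigC_ne_zero hα)

end ModOrd

lemma LC_ne_zero [LinearOrder (MMon k n)] {f : MixedAlg R k n} (hf : f ≠ 0) :
    LC f ≠ 0 := by
  obtain ⟨a, hax⟩ := Finset.max_of_nonempty (Finsupp.support_nonempty_iff.2 (MonoidAlgebra.coeff_eq_zero.not.2 hf))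
  have h1 : LMd f = a := by simp [LMd, hax]
  rw [LC, h1]
  exact Finsupp.mem_support_iff.1 (Finset.mem_of_max hax)

lemma barMap_zero_ne {f : MixedAlg R k n} (F : Fin r → MixedAlg R k n)
    {α : SigModule R k n r} (hlab : barMap F α = f) (hf : f ≠ 0) : α ≠ 0 := by
  rintro rfl
  exact hf (by rw [← hlab, barMap, Finsupp.sum_zero_index])

/-- Key arithmetic fact: over a PID, Bézout coefficients can be chosen avoiding
any single nontrivial linear condition. -/
lemma bezout_nonsing [IsDomain R] [IsPrincipalIdealRing R] [GCDMonoid R]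
    {a b A B : R} (ha : a ≠ 0) (hb : b ≠ 0) (hAB : A ≠ 0 ∨ B ≠ 0) :
    ∃ c d : R, c * a + d * b = gcd a b ∧ c * A + d * B ≠ 0 := by
  obtain ⟨x, y, hxy⟩ := exists_gcd_eq_mul_add_mul a b
  have hbez : x * a + y * b = gcd a b := by rw [hxy]; ring
  obtain ⟨a', ha'⟩ := gcd_dvd_left a b
  obtain ⟨b', hb'⟩ := gcd_dvd_right a b
  have hg : gcd a b ≠ 0 := fun h => ha ((gcd_eq_zero_iff a b).1 h).1
  by_cases h0 : x * A + y * B = 0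
  · refine ⟨x + b', y - a', by linear_combination hbez + b' * ha' - a' * hb', ?_⟩
    intro hcon
    have h1 : b' * A = a' * B := by linear_combination hcon - h0
    have h2 : b * A = a * B := by linear_combination A * hb' - B * ha' + gcd a b * h1
    have hAg : A * gcd a b = 0 := by
      have h3 : A * gcd a b = a * (x * A + y * B) := by
        rw [← hbez]; linear_combination y * h2
      rw [h3, h0, mul_zero]
    have hBg : B * gcd a b = 0 := by
      have h3 : B * gcd a b = b * (x * A + y * B) := by
        rw [← hbez]; linear_combination (-x) * h2
      rw [h3, h0, mul_zero]
    rcases hAB with hA | hB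
    · exact hA ((mul_eq_zero.1 hAg).resolve_right hg)
    · exact hB ((mul_eq_zero.1 hBg).resolve_right hg)
  · exact ⟨x, y, hbez, h0⟩

end GPolAux

/-- Lemma 4.8: G-polynomials are never singular.  For every
ambiguity `a` of `f^{[α]}`, `g^{[β]}` there exist Bézout coefficients `c, d` of
`LC(f)`, `LC(g)` such that `sig(G-Pol_{c,d}(a)) ≃ SIG(a)`. -/
theorem gpol_nonsingular
    {R : Type} [CommRing R] [IsDomain R] [IsPrincipalIdealRing R] [GCDMonoid R]
    {k n r : ℕ} [NeZero r]
    [LinearOrder (MMon k n)] [LinearOrder (ModMon k n r)]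
    (hord : IsOrderSetting k n r)
    (F : Fin r → MixedAlg R k n)
    (f g : MixedAlg R k n) (α β : SigModule R k n r)
    (hlabf : barMap F α = f) (hlabg : barMap F β = g)
    (hf : f ≠ 0) (hg : g ≠ 0)
    (m₁ : MMon k n) (n₁ : FreeMonoid (Fin n)) (m₂ : MMon k n) (n₂ : FreeMonoid (Fin n))
    (ha : IsAmb f g m₁ n₁ m₂ n₂) :
    ∃ c d : R, BezoutFor c d f g ∧
      sigb (GPolM c d α β m₁ n₁ m₂ n₂) = sigb (ambSIG f g α β m₁ n₁ m₂ n₂) := by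
  classical
  have hα : α ≠ 0 := barMap_zero_ne F hlabf hf
  have hβ : β ≠ 0 := barMap_zero_ne F hlabg hg
  have hLCf := LC_ne_zero hf
  have hLCg := LC_ne_zero hg
  have hlcm : lcm (LC f) (LC g) ≠ 0 := fun h =>
    ((lcm_eq_zero_iff (LC f) (LC g)).1 h).elim hLCf hLCg
  have hcfL : lcm (LC f) (LC g) = LC f * cofL f g :=
    Classical.choose_spec (dvd_lcm_left (LC f) (LC g))
  have hcfR : lcm (LC f) (LC g) = LC g * cofR f g :=
    Classical.choose_spec (dvd_lcm_right (LC f) (LC g))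
  have hcofL : cofL f g ≠ 0 := fun h => hlcm (by rw [hcfL, h, mul_zero])
  have hcofR : cofR f g ≠ 0 := fun h => hlcm (by rw [hcfR, h, mul_zero])
  set σ₁ := mulLR m₁ (sigMd α) n₁ with hσ₁
  set σ₂ := mulLR m₂ (sigMd β) n₂ with hσ₂
  have hs1 : sigb (scaleLR m₁ (cofL f g) α n₁) = (σ₁ : WithBot (ModMon k n r)) :=
    sigb_scaleLR hord m₁ n₁ hcofL hα
  have hs2 : sigb (scaleLR m₂ (cofR f g) β n₂) = (σ₂ : WithBot (ModMon k n r)) :=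
    sigb_scaleLR hord m₂ n₂ hcofR hβ
  have hambsig : sigb (ambSIG f g α β m₁ n₁ m₂ n₂)
      = ((max σ₁ σ₂ : ModMon k n r) : WithBot (ModMon k n r)) := by
    have hcond : (sigb (scaleLR m₂ (cofR f g) β n₂)
        ≤ sigb (scaleLR m₁ (cofL f g) α n₁)) ↔ σ₂ ≤ σ₁ := by
      rw [hs1, hs2]; exact WithBot.coe_le_coe
    rw [ambSIG]
    by_cases hle : σ₂ ≤ σ₁
    · rw [if_pos (hcond.2 hle), sigb_sigT, hs1, max_eq_left hle]
    · rw [if_neg (fun h => hle (hcond.1 h)), sigb_neg, sigb_sigT, hs2,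
        max_eq_right (le_of_not_ge hle)]
  have hsupp : ∀ c d : R, ∀ σ ∈ (GPolM c d α β m₁ n₁ m₂ n₂).support, σ ≤ max σ₁ σ₂ := by
    intro c d σ hσ
    rw [GPolM] at hσ
    rcases Finset.mem_union.1 (Finsupp.support_add hσ) with h | h
    · exact le_trans (scaleLR_support_le hord _ _ _ _ h) (le_max_left _ _)
    · exact le_trans (scaleLR_support_le hord _ _ _ _ h) (le_max_right _ _)
  rcases lt_trichotomy σ₁ σ₂ with hlt | heq | hgt
  · -- σ₁ < σ₂ : pick Bézout coefficients with `d ≠ 0`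
    obtain ⟨c, d, hbez, hcd⟩ := bezout_nonsing hLCf hLCg
      (Or.inr (sigC_ne_zero hβ) : (0 : R) ≠ 0 ∨ sigC β ≠ 0)
    refine ⟨c, d, hbez, ?_⟩
    rw [hambsig]
    have hmax : max σ₁ σ₂ = σ₂ := max_eq_right hlt.le
    have hz : scaleLR m₁ c α n₁ σ₂ = 0 := by
      by_contra hne
      exact absurd (scaleLR_support_le hord m₁ c α n₁ (Finsupp.mem_support_iff.2 hne))
        (not_le.2 hlt)
    have hval : (GPolM c d α β m₁ n₁ m₂ n₂) (max σ₁ σ₂) = d * sigC β := by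
      rw [hmax, GPolM, Finsupp.add_apply, hz, zero_add, hσ₂, scaleLR_apply]
      rfl
    refine supp_max_eq ?_ (hsupp c d)
    rw [hval]
    intro h
    exact hcd (by rw [mul_zero, zero_add, h])
  · -- σ₁ = σ₂ : pick Bézout coefficients with `c·sigC α + d·sigC β ≠ 0`
    obtain ⟨c, d, hbez, hcd⟩ := bezout_nonsing hLCf hLCg (Or.inl (sigC_ne_zero hα))
    refine ⟨c, d, hbez, ?_⟩
    rw [hambsig]
    have hmax : max σ₁ σ₂ = σ₁ := max_eq_left heq.ge
    have hval : (GPolM c d α β m₁ n₁ m₂ n₂) (max σ₁ σ₂)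
        = c * sigC α + d * sigC β := by
      rw [hmax, GPolM, Finsupp.add_apply]
      congr 1
      · rw [hσ₁, scaleLR_apply]; rfl
      · rw [heq, hσ₂, scaleLR_apply]; rfl
    refine supp_max_eq ?_ (hsupp c d)
    rw [hval]
    exact hcd
  · -- σ₂ < σ₁ : pick Bézout coefficients with `c ≠ 0`
    obtain ⟨c, d, hbez, hcd⟩ := bezout_nonsing hLCf hLCg
      (Or.inl (sigC_ne_zero hα) : sigC α ≠ 0 ∨ (0 : R) ≠ 0)
    refine ⟨c, d, hbez, ?_⟩
    rw [hambsig]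
    have hmax : max σ₁ σ₂ = σ₁ := max_eq_left hgt.le
    have hz : scaleLR m₂ d β n₂ σ₁ = 0 := by
      by_contra hne
      exact absurd (scaleLR_support_le hord m₂ d β n₂ (Finsupp.mem_support_iff.2 hne))
        (not_le.2 hgt)
    have hval : (GPolM c d α β m₁ n₁ m₂ n₂) (max σ₁ σ₂) = c * sigC α := by
      rw [hmax, GPolM, Finsupp.add_apply, hz, add_zero, hσ₁, scaleLR_apply]
      rfl
    refine supp_max_eq ?_ (hsupp c d)
    rw [hval]
    intro h
    exact hcd (by rw [mul_zero, add_zero, h])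
end

section
/- Let f^{[α]}, g^{[β]} ∈ I^{[Σ]} with f, g ≠ 0, let a = (m1⊗n1, m2⊗n2) ∈ amb(f^{[α]}, g^{[β]}), and let c, d ∈ R be any Bézout coefficients with c·LC(f) + d·LC(g) = gcd(LC(f), LC(g)). Then the G-polynomial G-Pol_{c,d}(a) has leading monomial LM(a) and leading coefficient gcd(LC(f), LC(g)); in particular, its leading term does not depend on the choice of Bézout coefficients c, d. -/
/-!  Signature Gröbner bases in the mixed algebra `R[x₁,…,x_k]⟨y₁,…,y_n⟩`
over a principal ideal domain `R`, following Hofstadler–Verron. -/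

open Finsupp

/-! ### Auxiliary lemmas for Statement 4 -/

section GpolAux
variable {R : Type} [CommRing R] {k n : ℕ}

lemma MMon.mul_left_cancel'' {a b c : MMon k n} (h : a * b = a * c) : b = c := by
  have hc := congrArg MMon.c h
  have hw := congrArg MMon.w h
  simp only [MMon.mul_c, MMon.mul_w] at hc hw
  ext : 1
  · exact add_left_cancel hc
  · exact mul_left_cancel hw

lemma MMon.mul_right_cancel'' {a b c : MMon k n} (h : b * a = c * a) : b = c := by
  have hc := congrArg MMon.c h
  have hw := congrArg MMon.w h
  simp only [MMon.mul_c, MMon.mul_w] at hc hw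
  ext : 1
  · exact add_right_cancel hc
  · exact mul_right_cancel hw

lemma trm_mul_wrd_apply (m : MMon k n) (c : R) (b : FreeMonoid (Fin n))
    (f : MixedAlg R k n) (σ : MMon k n) :
    (trm m c * f * wrd b : MixedAlg R k n).coeff (m * σ * ⟨0, b⟩) = c * f.coeff σ := by
  rw [wrd, MonoidAlgebra.coeff_mul_single_eq_coeff_mul (x := trm m c * f) (m₂ := m * σ)
    (fun a _ => ⟨fun h => MMon.mul_right_cancel'' h, fun h => by rw [h]⟩), mul_one]
  rw [trm, MonoidAlgebra.coeff_single_mul_eq_mul_coeff (x := f) (m₂ := σ)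
    (fun a _ => ⟨fun h => MMon.mul_left_cancel'' h, fun h => by rw [h]⟩)]

lemma support_trm_mul_wrd (m : MMon k n) (c : R) (b : FreeMonoid (Fin n)) (f : MixedAlg R k n) :
    ∀ τ ∈ (trm m c * f * wrd b).coeff.support, ∃ σ ∈ f.coeff.support, τ = m * σ * ⟨0, b⟩ := by
  classical
  intro τ hτ
  obtain ⟨y, hy, z, hz, hyz⟩ := Finset.mem_mul.1 (MonoidAlgebra.support_coeff_mul_subset _ _ hτ)
  have hz' : z = (⟨0, b⟩ : MMon k n) := Finset.mem_singleton.1 (Finsupp.support_single_subset hz)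
  obtain ⟨y', hy', σ, hσ, hy'σ⟩ := Finset.mem_mul.1 (MonoidAlgebra.support_coeff_mul_subset _ _ hy)
  have hy'' : y' = m := Finset.mem_singleton.1 (Finsupp.support_single_subset hy')
  exact ⟨σ, hσ, by rw [← hyz, ← hy'σ, hy'', hz']⟩

variable [LinearOrder (MMon k n)]

lemma LMb_eq_coe_LMd {f : MixedAlg R k n} (hf : f ≠ 0) :
    LMb f = (LMd f : WithBot (MMon k n)) := by
  obtain ⟨m', hm'⟩ := Finset.max_of_nonempty (Finsupp.support_nonempty_iff.2 (fun h => hf (MonoidAlgebra.coeff_eq_zero.1 h)))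
  rw [LMb, LMd, hm']
  rfl

lemma LMd_mem_support {f : MixedAlg R k n} (hf : f ≠ 0) : LMd f ∈ f.coeff.support := by
  obtain ⟨m', hm'⟩ := Finset.max_of_nonempty (Finsupp.support_nonempty_iff.2 (fun h => hf (MonoidAlgebra.coeff_eq_zero.1 h)))
  have : LMd f = m' := by rw [LMd, hm']; rfl
  rw [this]
  exact Finset.mem_of_max hm'

lemma le_LMd {f : MixedAlg R k n} {σ : MMon k n} (hσ : σ ∈ f.coeff.support) : σ ≤ LMd f := by
  have hf : f ≠ 0 := by
    intro h; rw [h] at hσ; simp at hσ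
  obtain ⟨m', hm'⟩ := Finset.max_of_nonempty (Finsupp.support_nonempty_iff.2 (fun h => hf (MonoidAlgebra.coeff_eq_zero.1 h)))
  have hL : LMd f = m' := by rw [LMd, hm']; rfl
  have := Finset.le_max hσ
  rw [hm'] at this
  rw [hL]
  exact_mod_cast this

lemma isAmb_lm_eq {f g : MixedAlg R k n} {m₁ m₂ : MMon k n} {n₁ n₂ : FreeMonoid (Fin n)}
    (ha : IsAmb f g m₁ n₁ m₂ n₂) :
    m₁ * LMd f * (⟨0, n₁⟩ : MMon k n) = m₂ * LMd g * ⟨0, n₂⟩ := by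
  obtain ⟨a, b, cc, dd, hw, h1, h2, h3, h4⟩ := ha
  subst h1 h2 h3 h4
  ext : 1
  · show ((LMd f).c ⊔ (LMd g).c - (LMd f).c) + (LMd f).c + 0 =
      ((LMd f).c ⊔ (LMd g).c - (LMd g).c) + (LMd g).c + 0
    rw [add_zero, add_zero, tsub_add_cancel_of_le le_sup_left,
      tsub_add_cancel_of_le le_sup_right]
  · show a * (LMd f).w * n₁ = cc * (LMd g).w * n₂
    cases hw with
    | overlap₁ a b p q h _ _ _ _ => simpa using h
    | overlap₂ a b p q h _ _ _ _ => simpa using h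
    | inclusion₁ a b p q h => simpa using h
    | inclusion₂ a b p q h => simpa using h
    | external₁ m p q => simp [mul_assoc]
    | external₂ m p q => simp [mul_assoc]

end GpolAux

/-- leading term of G-polynomials.  For any Bézout
coefficients `c, d` of `LC(f)`, `LC(g)`, the G-polynomial `G-Pol_{c,d}(a)` has
leading monomial `LM(a)` and leading coefficient `gcd(LC(f), LC(g))`; in
particular its leading term `gcd(LC f, LC g)·LM(a)` does not depend on the
choice of `c, d`. -/
theorem gpol_leading_term
    {R : Type} [CommRing R] [IsDomain R] [IsPrincipalIdealRing R] [GCDMonoid R]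
    {k n r : ℕ} [NeZero r]
    [LinearOrder (MMon k n)] [LinearOrder (ModMon k n r)]
    (hord : IsOrderSetting k n r)
    (F : Fin r → MixedAlg R k n)
    (f g : MixedAlg R k n) (α β : SigModule R k n r)
    (hlabf : barMap F α = f) (hlabg : barMap F β = g)
    (hf : f ≠ 0) (hg : g ≠ 0)
    (m₁ : MMon k n) (n₁ : FreeMonoid (Fin n)) (m₂ : MMon k n) (n₂ : FreeMonoid (Fin n))
    (ha : IsAmb f g m₁ n₁ m₂ n₂)
    (c d : R) (hcd : BezoutFor c d f g) :
    LMb (GPolP c d f g m₁ n₁ m₂ n₂) = (ambLM f m₁ n₁ : WithBot (MMon k n)) ∧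
    LC (GPolP c d f g m₁ n₁ m₂ n₂) = gcd (LC f) (LC g) ∧
    LTerm (GPolP c d f g m₁ n₁ m₂ n₂) = trm (ambLM f m₁ n₁) (gcd (LC f) (LC g)) := by
  classical
  set M : MMon k n := m₁ * LMd f * ⟨0, n₁⟩ with hM
  have hMamb : ambLM f m₁ n₁ = M := rfl
  have hMg : M = m₂ * LMd g * ⟨0, n₂⟩ := isAmb_lm_eq ha
  set G : MixedAlg R k n := GPolP c d f g m₁ n₁ m₂ n₂ with hG
  -- coefficient of G at M
  have hcoeff : G.coeff M = gcd (LC f) (LC g) := by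
    have h1 : (trm m₁ c * f * wrd n₁ : MixedAlg R k n).coeff M = c * LC f :=
      trm_mul_wrd_apply m₁ c n₁ f (LMd f)
    have h2 : (trm m₂ d * g * wrd n₂ : MixedAlg R k n).coeff M = d * LC g := by
      rw [hMg]; exact trm_mul_wrd_apply m₂ d n₂ g (LMd g)
    have : G.coeff M = (trm m₁ c * f * wrd n₁ : MixedAlg R k n).coeff M +
        (trm m₂ d * g * wrd n₂ : MixedAlg R k n).coeff M := by
      rw [hG, GPolP]; rfl
    rw [this, h1, h2]
    exact hcd
  have hLCf : LC f ≠ 0 := by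
    rw [LC]
    exact Finsupp.mem_support_iff.1 (LMd_mem_support hf)
  have hgcd0 : gcd (LC f) (LC g) ≠ 0 := by
    intro h
    exact hLCf ((gcd_eq_zero_iff _ _).1 h).1
  have hMmem : M ∈ G.coeff.support := Finsupp.mem_support_iff.2 (by rw [hcoeff]; exact hgcd0)
  -- all support monomials are ≤ M
  have hbound : ∀ τ ∈ G.coeff.support, τ ≤ M := by
    intro τ hτ
    have := Finsupp.support_add (g₁ := (trm m₁ c * f * wrd n₁ : MixedAlg R k n).coeff) (g₂ := (trm m₂ d * g * wrd n₂ : MixedAlg R k n).coeff)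
    have hτ' : τ ∈ (trm m₁ c * f * wrd n₁ : MixedAlg R k n).coeff.support ∪
        (trm m₂ d * g * wrd n₂ : MixedAlg R k n).coeff.support := this (by rw [hG, GPolP] at hτ; exact hτ)
    rcases Finset.mem_union.1 hτ' with h | h
    · obtain ⟨σ, hσ, rfl⟩ := support_trm_mul_wrd m₁ c n₁ f τ h
      exact hord.mon_mul m₁ ⟨0, n₁⟩ σ (LMd f) (le_LMd hσ)
    · obtain ⟨σ, hσ, rfl⟩ := support_trm_mul_wrd m₂ d n₂ g τ h
      rw [hMg]
      exact hord.mon_mul m₂ ⟨0, n₂⟩ σ (LMd g) (le_LMd hσ)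
  -- conclude
  have hmax : G.coeff.support.max = (M : WithBot (MMon k n)) := by
    apply le_antisymm
    · exact Finset.max_le fun τ hτ => WithBot.coe_le_coe.2 (hbound τ hτ)
    · exact Finset.le_max hMmem
  have hLMb : LMb G = (M : WithBot (MMon k n)) := hmax
  have hLMd : LMd G = M := by rw [LMd, hmax]; rfl
  have hLC : LC G = gcd (LC f) (LC g) := by rw [LC, hLMd, hcoeff]
  refine ⟨by rw [hLMb, hMamb], hLC, ?_⟩
  rw [LTerm, hLC, hLMd, hMamb]
end
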